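/- Let N ≥ 2 and 1 ≤ k < N be integers, and Z = {z ∈ {0,1}^N : Σᵢ zᵢ = k}. Consider unit costs and cost functions f_r(z) = Σᵢ rᵢ(1 - zᵢ). For any deterministic sequence of states z₁,…,z_T ∈ Z (where z_{t+1} may depend on r₁,…,r_t), the adversary choosing r_t = indicator vector of the complement of the support of z_t (one request per uncached file) forces Σₜ f_{r_t}(z_t) - min_{z∈Z} Σₜ f_{r_t}(z) ≥ k(1 - k/N) T. -/

import Mathlib

open Finset

lemma countmem (N k : ℕ) (hk : 1 ≤ k) (hkN : k ≤ N) (i : Fin N) :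
    (((Finset.univ : Finset (Fin N)).powersetCard k).filter (fun S => i ∈ S)).card
      = (N-1).choose (k-1) := by
  have : (((Finset.univ : Finset (Fin N)).powersetCard k).filter (fun S => i ∈ S)).card
      = ((Finset.univ.erase i).powersetCard (k-1)).card := by
    apply Finset.card_bij (fun S _ => S.erase i)
    · intro S hS
      simp only [mem_filter, mem_powersetCard] at hS
      simp only [mem_powersetCard]
      constructor
      · intro x hx
        simp only [mem_erase] at hx ⊢
        exact ⟨hx.1, mem_univ _⟩
      · rw [Finset.card_erase_of_mem hS.2, hS.1.2]
    · intro S hS S' hS' h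
      simp only [mem_filter] at hS hS'
      rw [← Finset.insert_erase hS.2, ← Finset.insert_erase hS'.2, h]
    · intro A hA
      simp only [mem_powersetCard] at hA
      have hiA : i ∉ A := fun h => (Finset.mem_erase.1 (hA.1 h)).1 rfl
      refine ⟨insert i A, ?_, ?_⟩
      · simp only [mem_filter, mem_powersetCard]
        refine ⟨⟨fun x _ => mem_univ x, ?_⟩, mem_insert_self _ _⟩
        rw [Finset.card_insert_of_notMem hiA, hA.2]
        omega
      · rw [Finset.erase_insert hiA]
  rw [this, Finset.card_powersetCard, Finset.card_erase_of_mem (mem_univ i), Finset.card_univ,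
    Fintype.card_fin]

/-- Against the adversary requesting exactly the uncached files
(`r_t = 1 - z_t` coordinatewise), any deterministic integral caching policy has
regret at least `k(1 - k/N)T` w.r.t. the best static integral state. -/
theorem stmt11 (N k T : ℕ) (hN : 2 ≤ N) (hk : 1 ≤ k) (hkN : k < N)
    (z : ℕ → Fin N → ℝ)
    (hz : ∀ t ∈ Finset.Icc 1 T, (∀ i, z t i = 0 ∨ z t i = 1) ∧ ∑ i, z t i = k)
    (r : ℕ → Fin N → ℝ) (hr : ∀ t i, r t i = 1 - z t i)
    (y : Fin N → ℝ) (hy : (∀ i, y i = 0 ∨ y i = 1) ∧ ∑ i, y i = k)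
    (hymin : ∀ y' : Fin N → ℝ, ((∀ i, y' i = 0 ∨ y' i = 1) ∧ ∑ i, y' i = k) →
      (∑ t ∈ Finset.Icc 1 T, ∑ i, r t i * (1 - y i)) ≤
        ∑ t ∈ Finset.Icc 1 T, ∑ i, r t i * (1 - y' i)) :
    (k : ℝ) * (1 - (k : ℝ) / N) * T ≤
      (∑ t ∈ Finset.Icc 1 T, ∑ i, r t i * (1 - z t i)) -
        ∑ t ∈ Finset.Icc 1 T, ∑ i, r t i * (1 - y i) := by
  have hN0 : (N : ℝ) ≠ 0 := by positivity
  set R : Fin N → ℝ := fun i => ∑ t ∈ Finset.Icc 1 T, r t i with hR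
  -- per-step request sum is N - k
  have hstep : ∀ t ∈ Finset.Icc 1 T, ∑ i, r t i = (N : ℝ) - k := by
    intro t ht
    have := (hz t ht).2
    simp only [hr]
    rw [Finset.sum_sub_distrib, Finset.sum_const, Finset.card_univ, Fintype.card_fin,
      this, nsmul_eq_mul, mul_one]
  -- total requests
  have hTotal : ∑ i, R i = (T : ℝ) * ((N : ℝ) - k) := by
    rw [hR, Finset.sum_comm]
    rw [Finset.sum_congr rfl hstep, Finset.sum_const, Nat.card_Icc, nsmul_eq_mul]
    norm_num
  -- policy cost
  have hcost : (∑ t ∈ Finset.Icc 1 T, ∑ i, r t i * (1 - z t i)) = (T : ℝ) * ((N : ℝ) - k) := by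
    have : ∀ t ∈ Finset.Icc 1 T, ∑ i, r t i * (1 - z t i) = ∑ i, r t i := by
      intro t ht
      apply Finset.sum_congr rfl
      intro i _
      rcases (hz t ht).1 i with h | h <;> rw [hr, h] <;> ring
    rw [Finset.sum_congr rfl this, Finset.sum_congr rfl hstep, Finset.sum_const,
      Nat.card_Icc, nsmul_eq_mul]
    norm_num
  -- averaging: exists a k-set with large request mass
  set P := (Finset.univ : Finset (Fin N)).powersetCard k with hP
  have hPne : P.Nonempty := Finset.powersetCard_nonempty_of_le (by
    rw [Finset.card_univ, Fintype.card_fin]; omega)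
  have hsumP : ∑ S ∈ P, ∑ i ∈ S, R i = ((N-1).choose (k-1) : ℝ) * ∑ i, R i := by
    have : ∑ S ∈ P, ∑ i ∈ S, R i
        = ∑ S ∈ P, ∑ i, if i ∈ S then R i else 0 := by
      apply Finset.sum_congr rfl
      intro S _
      rw [Finset.sum_ite_mem, Finset.univ_inter]
    rw [this, Finset.sum_comm]
    rw [Finset.mul_sum]
    apply Finset.sum_congr rfl
    intro i _
    rw [Finset.sum_ite, Finset.sum_const_zero, add_zero, Finset.sum_const,
      countmem N k hk (le_of_lt hkN) i, nsmul_eq_mul]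
  have hchoose : ((N-1).choose (k-1) : ℝ) * N = (N.choose k : ℝ) * k := by
    have h1 : N * (N-1).choose (k-1) = N.choose k * k := by
      have := Nat.add_one_mul_choose_eq (N-1) (k-1)
      have e1 : (N-1) + 1 = N := by omega
      have e2 : (k-1) + 1 = k := by omega
      rw [e1, e2] at this
      linarith [this]
    have := congrArg (Nat.cast : ℕ → ℝ) h1
    push_cast at this
    linarith
  have hex : ∃ S ∈ P, (k : ℝ) / N * ((T : ℝ) * ((N : ℝ) - k)) ≤ ∑ i ∈ S, R i := by
    by_contra hcon
    push_neg at hcon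
    have : ∑ S ∈ P, ∑ i ∈ S, R i < ∑ S ∈ P, (k : ℝ) / N * ((T : ℝ) * ((N : ℝ) - k)) :=
      Finset.sum_lt_sum_of_nonempty hPne hcon
    rw [hsumP, hTotal, Finset.sum_const, nsmul_eq_mul] at this
    have hcard : (P.card : ℝ) = (N.choose k : ℝ) := by
      rw [hP, Finset.card_powersetCard, Finset.card_univ, Fintype.card_fin]
    rw [hcard] at this
    have : ((N-1).choose (k-1) : ℝ) * ((T : ℝ) * ((N : ℝ) - k)) * N
        < (N.choose k : ℝ) * ((k : ℝ) / N * ((T : ℝ) * ((N : ℝ) - k))) * N := by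
      apply mul_lt_mul_of_pos_right this (by positivity)
    rw [show (N.choose k : ℝ) * ((k : ℝ) / N * ((T : ℝ) * ((N : ℝ) - k))) * N
        = (N.choose k : ℝ) * k * ((T : ℝ) * ((N : ℝ) - k)) by field_simp] at this
    rw [show ((N-1).choose (k-1) : ℝ) * ((T : ℝ) * ((N : ℝ) - k)) * N
        = ((N-1).choose (k-1) : ℝ) * N * ((T : ℝ) * ((N : ℝ) - k)) from by ring, hchoose] at this
    exact lt_irrefl _ this
  obtain ⟨S, hSP, hSge⟩ := hex
  have hSmem := Finset.mem_powersetCard.1 hSP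
  -- static candidate y'
  set y' : Fin N → ℝ := fun i => if i ∈ S then 1 else 0 with hy'
  have hy'valid : (∀ i, y' i = 0 ∨ y' i = 1) ∧ ∑ i, y' i = k := by
    constructor
    · intro i; by_cases h : i ∈ S <;> simp [hy', h]
    · simp only [hy', Finset.sum_ite_mem, Finset.univ_inter, Finset.sum_const, hSmem.2,
        nsmul_eq_mul, mul_one]
  have hy'cost : ∑ t ∈ Finset.Icc 1 T, ∑ i, r t i * (1 - y' i)
      = (T : ℝ) * ((N : ℝ) - k) - ∑ i ∈ S, R i := by
    rw [Finset.sum_comm, ← hTotal]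
    have : ∀ i ∈ (Finset.univ : Finset (Fin N)),
        ∑ t ∈ Finset.Icc 1 T, r t i * (1 - y' i) = R i * (1 - y' i) := by
      intro i _
      rw [hR, ← Finset.sum_mul]
    rw [Finset.sum_congr rfl this]
    have : ∑ i, R i * (1 - y' i) = ∑ i, (R i - if i ∈ S then R i else 0) := by
      apply Finset.sum_congr rfl
      intro i _
      by_cases h : i ∈ S <;> simp [hy', h]
    rw [this, Finset.sum_sub_distrib, Finset.sum_ite_mem, Finset.univ_inter]
  have hybound : ∑ t ∈ Finset.Icc 1 T, ∑ i, r t i * (1 - y i)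
      ≤ (T : ℝ) * ((N : ℝ) - k) - (k : ℝ) / N * ((T : ℝ) * ((N : ℝ) - k)) := by
    calc ∑ t ∈ Finset.Icc 1 T, ∑ i, r t i * (1 - y i)
        ≤ ∑ t ∈ Finset.Icc 1 T, ∑ i, r t i * (1 - y' i) := hymin y' hy'valid
      _ = (T : ℝ) * ((N : ℝ) - k) - ∑ i ∈ S, R i := hy'cost
      _ ≤ _ := by linarith
  rw [hcost]
  have : (k : ℝ) * (1 - (k : ℝ) / N) * T = (k : ℝ) / N * ((T : ℝ) * ((N : ℝ) - k)) := by
    field_simp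
  linarith
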